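/- Let (B, ‖·‖_B) be a Banach space, let p, q > 0, and let a : [0, ∞) → B be locally Bochner integrable such that (1/T)·∫₀^T a(t) dt converges in norm to some L ∈ B as T → ∞. Then (1/T)·∫₀^T w_{p,q}(t/T)·a(t) dt also converges in norm to L as T → ∞. -/

import Mathlib

open MeasureTheory Filter

/-- The weighting function `w_{p,q}`. -/
noncomputable def wpq (p q : ℝ) (x : ℝ) : ℝ :=
  if x ∈ Set.Ioo (0 : ℝ) 1 then
    (∫ s in (0:ℝ)..1, Real.exp (-(s ^ (-p) * (1 - s) ^ (-q))))⁻¹ *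
      Real.exp (-(x ^ (-p) * (1 - x) ^ (-q)))
  else 0

noncomputable def cpq (p q : ℝ) : ℝ := ∫ s in (0:ℝ)..1, Real.exp (-(s ^ (-p) * (1 - s) ^ (-q)))

/-- Negative of the derivative of `wpq`, extended by `0` outside `(0,1)`. -/
noncomputable def wD (p q : ℝ) (x : ℝ) : ℝ :=
  if x ∈ Set.Ioo (0:ℝ) 1 then
    (cpq p q)⁻¹ * (Real.exp (-(x ^ (-p) * (1 - x) ^ (-q))) *
      (q * x ^ (-p) * (1 - x) ^ (-q - 1) - p * x ^ (-p - 1) * (1 - x) ^ (-q)))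
  else 0

lemma meas_expf (p q : ℝ) :
    Measurable fun s : ℝ => Real.exp (-(s ^ (-p) * (1 - s) ^ (-q))) := by
  fun_prop

lemma ii_expf (p q : ℝ) :
    IntervalIntegrable (fun s : ℝ => Real.exp (-(s ^ (-p) * (1 - s) ^ (-q)))) volume 0 1 := by
  rw [intervalIntegrable_iff_integrableOn_Ioc_of_le zero_le_one]
  refine Integrable.mono' (integrable_const 1) ((meas_expf p q).aestronglyMeasurable) ?_
  filter_upwards [ae_restrict_mem measurableSet_Ioc] with s hs
  rw [Real.norm_eq_abs, abs_of_pos (Real.exp_pos _), Real.exp_le_one_iff, neg_nonpos]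
  exact mul_nonneg (Real.rpow_nonneg hs.1.le _) (Real.rpow_nonneg (by linarith [hs.2]) _)

lemma cpq_pos (p q : ℝ) : 0 < cpq p q :=
  intervalIntegral.intervalIntegral_pos_of_pos_on (ii_expf p q)
    (fun x _ => Real.exp_pos _) one_pos

lemma wpq_eq (p q x : ℝ) :
    wpq p q x = if x ∈ Set.Ioo (0:ℝ) 1 then
      (cpq p q)⁻¹ * Real.exp (-(x ^ (-p) * (1 - x) ^ (-q))) else 0 := rfl

lemma wpq_nonneg (p q x : ℝ) : 0 ≤ wpq p q x := by
  rw [wpq_eq]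
  split
  · exact mul_nonneg (inv_nonneg.2 (cpq_pos p q).le) (Real.exp_pos _).le
  · exact le_rfl

lemma meas_wpq (p q : ℝ) : Measurable (wpq p q) := by
  have : wpq p q = Set.indicator (Set.Ioo (0:ℝ) 1)
      (fun x => (cpq p q)⁻¹ * Real.exp (-(x ^ (-p) * (1 - x) ^ (-q)))) :=
    funext fun x => by rw [wpq_eq, Set.indicator_apply]
  rw [this]
  exact (measurable_const.mul (meas_expf p q)).indicator measurableSet_Ioo

lemma integral_wpq (p q : ℝ) : ∫ s in (0:ℝ)..1, wpq p q s = 1 := by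
  rw [intervalIntegral.integral_of_le zero_le_one, integral_Ioc_eq_integral_Ioo]
  have h1 : ∫ s in Set.Ioo (0:ℝ) 1, wpq p q s
      = ∫ s in Set.Ioo (0:ℝ) 1, (cpq p q)⁻¹ * Real.exp (-(s ^ (-p) * (1 - s) ^ (-q))) := by
    refine setIntegral_congr_fun measurableSet_Ioo fun s hs => ?_
    rw [wpq_eq, if_pos hs]
  rw [h1, integral_const_mul, ← integral_Ioc_eq_integral_Ioo,
    ← intervalIntegral.integral_of_le zero_le_one]
  exact inv_mul_cancel₀ (cpq_pos p q).ne'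

lemma hasDerivAt_wpq (p q : ℝ) {x : ℝ} (hx : x ∈ Set.Ioo (0:ℝ) 1) :
    HasDerivAt (wpq p q) (-(wD p q x)) x := by
  have hx0 : x ≠ 0 := hx.1.ne'
  have hx1 : (1:ℝ) - x ≠ 0 := by have := hx.2; intro hc; linarith [sub_eq_zero.mp hc]
  have h1 : HasDerivAt (fun y : ℝ => y ^ (-p)) (-p * x ^ (-p - 1)) x :=
    Real.hasDerivAt_rpow_const (Or.inl hx0)
  have h2 : HasDerivAt (fun y : ℝ => (1 - y) ^ (-q)) (-q * (1 - x) ^ (-q - 1) * (-1)) x := by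
    have hin : HasDerivAt (fun y : ℝ => 1 - y) (-1) x := by
      simpa using (hasDerivAt_id x).const_sub 1
    exact (Real.hasDerivAt_rpow_const (Or.inl hx1)).comp x hin
  have hf := h1.mul h2
  have he := (Real.hasDerivAt_exp _).comp x hf.neg
  have hw := he.const_mul (cpq p q)⁻¹
  have hev : wpq p q =ᶠ[nhds x]
      fun y => (cpq p q)⁻¹ * Real.exp (-(y ^ (-p) * (1 - y) ^ (-q))) := by
    filter_upwards [isOpen_Ioo.mem_nhds hx] with y hy
    rw [wpq_eq, if_pos hy]
  refine (HasDerivAt.congr_of_eventuallyEq ?_ hev)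
  convert hw using 1
  · rfl
  · rfl
  rw [wD, if_pos hx]
  simp only [Pi.neg_apply, Pi.mul_apply]
  ring

lemma abs_wD_le (p q : ℝ) (hp : 0 < p) (hq : 0 < q) {x : ℝ} (hx : x ∈ Set.Ioo (0:ℝ) 1) :
    |wD p q x| ≤ (cpq p q)⁻¹ * (4 * p * x ^ (p - 1) + 4 * q * (1 - x) ^ (q - 1)) := by
  obtain ⟨hx0, hx1⟩ := hx
  have h1x : (0:ℝ) < 1 - x := by linarith
  set A := x ^ (-p) with hA
  set B := (1 - x) ^ (-q) with hB
  have hApos : 0 < A := Real.rpow_pos_of_pos hx0 _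
  have hBpos : 0 < B := Real.rpow_pos_of_pos h1x _
  have hAinv : A⁻¹ = x ^ p := by rw [hA, ← Real.rpow_neg hx0.le, neg_neg]
  have hBinv : B⁻¹ = (1 - x) ^ q := by rw [hB, ← Real.rpow_neg h1x.le, neg_neg]
  have hA1 : x ^ (-p - 1) = A * x⁻¹ := by
    rw [hA, show -p - 1 = -p + (-1) by ring, Real.rpow_add hx0, Real.rpow_neg_one]
  have hB1 : (1 - x) ^ (-q - 1) = B * (1 - x)⁻¹ := by
    rw [hB, show -q - 1 = -q + (-1) by ring, Real.rpow_add h1x, Real.rpow_neg_one]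
  have hxp1 : x ^ (p - 1) = A⁻¹ * x⁻¹ := by
    rw [hAinv, show p - 1 = p + (-1) by ring, Real.rpow_add hx0, Real.rpow_neg_one]
  have hxq1 : (1 - x) ^ (q - 1) = B⁻¹ * (1 - x)⁻¹ := by
    rw [hBinv, show q - 1 = q + (-1) by ring, Real.rpow_add h1x, Real.rpow_neg_one]
  have hexp : Real.exp (-(A * B)) ≤ 4 * ((A * B)⁻¹ * (A * B)⁻¹) := by
    have hAB : 0 < A * B := mul_pos hApos hBpos
    have h2 : A * B / 2 ≤ Real.exp (A * B / 2) := by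
      have := Real.add_one_le_exp (A * B / 2); linarith
    have h3 : (A * B / 2) ^ 2 ≤ Real.exp (A * B) := by
      calc (A * B / 2) ^ 2 ≤ Real.exp (A * B / 2) ^ 2 := by
            apply pow_le_pow_left₀ (by positivity) h2
        _ = Real.exp (A * B) := by
            rw [sq, ← Real.exp_add]; ring_nf
    rw [Real.exp_neg]
    rw [show 4 * ((A * B)⁻¹ * (A * B)⁻¹) = ((A * B / 2) ^ 2)⁻¹ by field_simp; ring]
    exact inv_anti₀ (by positivity) h3
  have hBle1 : B⁻¹ ≤ 1 := by
    rw [hBinv]; exact Real.rpow_le_one h1x.le (by linarith) hq.le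
  have hAle1 : A⁻¹ ≤ 1 := by
    rw [hAinv]; exact Real.rpow_le_one hx0.le hx1.le hp.le
  rw [wD, if_pos ⟨hx0, hx1⟩, abs_mul, abs_of_nonneg (inv_nonneg.2 (cpq_pos p q).le)]
  gcongr (cpq p q)⁻¹ * ?_
  · exact inv_nonneg.2 (cpq_pos p q).le
  rw [abs_mul, abs_of_pos (Real.exp_pos _)]
  calc Real.exp (-(A * B)) * |q * A * (1 - x) ^ (-q - 1) - p * x ^ (-p - 1) * B|
      ≤ Real.exp (-(A * B)) * (q * A * (1 - x) ^ (-q - 1) + p * x ^ (-p - 1) * B) := by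
        gcongr
        refine (abs_sub _ _).trans ?_
        have e1 : (0:ℝ) ≤ q * A * (1 - x) ^ (-q - 1) :=
          mul_nonneg (mul_nonneg hq.le hApos.le) (Real.rpow_nonneg h1x.le _)
        have e2 : (0:ℝ) ≤ p * x ^ (-p - 1) * B :=
          mul_nonneg (mul_nonneg hp.le (Real.rpow_nonneg hx0.le _)) hBpos.le
        rw [abs_of_nonneg e1, abs_of_nonneg e2]
    _ = Real.exp (-(A * B)) * (q * A * B * (1 - x)⁻¹ + p * A * B * x⁻¹) := by
        rw [hA1, hB1]; ring
    _ ≤ (4 * ((A * B)⁻¹ * (A * B)⁻¹)) * (q * A * B * (1 - x)⁻¹ + p * A * B * x⁻¹) := by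
        have h1 : (0:ℝ) ≤ (1 - x)⁻¹ := by positivity
        have h2 : (0:ℝ) ≤ x⁻¹ := by positivity
        have h3 : (0:ℝ) ≤ q * A * B * (1 - x)⁻¹ + p * A * B * x⁻¹ := by positivity
        exact mul_le_mul_of_nonneg_right hexp h3
    _ = 4 * p * (A⁻¹ * x⁻¹) * (B⁻¹ * 1) + 4 * q * (B⁻¹ * (1 - x)⁻¹) * (A⁻¹ * 1) := by
        field_simp
        ring
    _ ≤ 4 * p * (A⁻¹ * x⁻¹) * 1 + 4 * q * (B⁻¹ * (1 - x)⁻¹) * 1 := by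
        have h1 : (0:ℝ) ≤ 4 * p * (A⁻¹ * x⁻¹) := by positivity
        have h2 : (0:ℝ) ≤ 4 * q * (B⁻¹ * (1 - x)⁻¹) := by positivity
        have b1 : B⁻¹ * 1 ≤ 1 := by simpa using hBle1
        have b2 : A⁻¹ * 1 ≤ 1 := by simpa using hAle1
        exact add_le_add (mul_le_mul_of_nonneg_left b1 h1) (mul_le_mul_of_nonneg_left b2 h2)
    _ = 4 * p * x ^ (p - 1) + 4 * q * (1 - x) ^ (q - 1) := by
        rw [hxp1, hxq1]; ring

lemma meas_wD (p q : ℝ) : Measurable (wD p q) := by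
  have : wD p q = Set.indicator (Set.Ioo (0:ℝ) 1)
      (fun x => (cpq p q)⁻¹ * (Real.exp (-(x ^ (-p) * (1 - x) ^ (-q))) *
        (q * x ^ (-p) * (1 - x) ^ (-q - 1) - p * x ^ (-p - 1) * (1 - x) ^ (-q)))) :=
    funext fun x => by rw [wD, Set.indicator_apply]
  rw [this]
  apply Measurable.indicator _ measurableSet_Ioo
  fun_prop

lemma integrable_wD (p q : ℝ) (hp : 0 < p) (hq : 0 < q) : Integrable (wD p q) volume := by
  have hbd : IntervalIntegrable
      (fun x : ℝ => (cpq p q)⁻¹ * (4 * p * x ^ (p - 1) + 4 * q * (1 - x) ^ (q - 1)))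
      volume 0 1 := by
    apply IntervalIntegrable.const_mul
    apply IntervalIntegrable.add
    · exact (intervalIntegral.intervalIntegrable_rpow' (by linarith)).const_mul _
    · have h := (intervalIntegral.intervalIntegrable_rpow'
        (a := 0) (b := 1) (r := q - 1) (by linarith)).comp_sub_left 1
      simpa using (h.const_mul (4 * q)).symm
  have hG : IntegrableOn
      (fun x : ℝ => (cpq p q)⁻¹ * (4 * p * x ^ (p - 1) + 4 * q * (1 - x) ^ (q - 1)))
      (Set.Ioo (0:ℝ) 1) volume :=
    ((intervalIntegrable_iff_integrableOn_Ioc_of_le zero_le_one).mp hbd).mono_set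
      Set.Ioo_subset_Ioc_self
  have key : Integrable (Set.indicator (Set.Ioo (0:ℝ) 1) (wD p q)) volume := by
    rw [integrable_indicator_iff measurableSet_Ioo]
    refine Integrable.mono' hG ((meas_wD p q).aestronglyMeasurable.restrict) ?_
    filter_upwards [ae_restrict_mem measurableSet_Ioo] with x hx
    rw [Real.norm_eq_abs]
    exact (abs_wD_le p q hp hq hx).trans_eq (by ring_nf)
  have : Set.indicator (Set.Ioo (0:ℝ) 1) (wD p q) = wD p q := by
    funext x
    rw [Set.indicator_apply]
    split
    · rfl
    · rw [wD]; split
      · tauto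
      · rfl
  rwa [this] at key

lemma ii_wD (p q : ℝ) (hp : 0 < p) (hq : 0 < q) :
    ∀ a b : ℝ, IntervalIntegrable (wD p q) volume a b :=
  fun _ _ => (integrable_wD p q hp hq).intervalIntegrable

lemma wpq_eq_integral_wD (p q : ℝ) (hp : 0 < p) (hq : 0 < q) {s : ℝ}
    (hs : s ∈ Set.Ioc (0:ℝ) 1) :
    wpq p q s = ∫ u in s..1, wD p q u := by
  rcases eq_or_lt_of_le hs.2 with h1 | h1
  · rw [h1]
    rw [wpq_eq, if_neg (by simp), intervalIntegral.integral_same]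
  have hsI : s ∈ Set.Ioo (0:ℝ) 1 := ⟨hs.1, h1⟩
  -- key identity on compact subintervals
  have key : ∀ s' ∈ Set.Ioo s 1, wpq p q s = wpq p q s' + ∫ u in s..s', wD p q u := by
    intro s' hs'
    have hsub : Set.uIcc s s' ⊆ Set.Ioo (0:ℝ) 1 := by
      rw [Set.uIcc_of_le hs'.1.le]
      intro y hy
      exact ⟨lt_of_lt_of_le hs.1 hy.1, lt_of_le_of_lt hy.2 hs'.2⟩
    have := intervalIntegral.integral_eq_sub_of_hasDerivAt
      (f := wpq p q) (f' := fun u => -(wD p q u))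
      (fun x hx => hasDerivAt_wpq p q (hsub hx)) ((ii_wD p q hp hq s s').neg)
    rw [intervalIntegral.integral_neg] at this
    linarith [this]
  -- limits along 𝓝[<] 1
  have hne : (nhdsWithin (1:ℝ) (Set.Iio 1)).NeBot := by infer_instance
  have hmem : Set.Ioo s 1 ∈ nhdsWithin (1:ℝ) (Set.Iio 1) :=
    mem_nhdsWithin.2 ⟨Set.Ioi s, isOpen_Ioi, h1, by
      intro y hy; exact ⟨hy.1, hy.2⟩⟩
  have hwpq0 : Tendsto (wpq p q) (nhdsWithin (1:ℝ) (Set.Iio 1)) (nhds 0) := by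
    have hb : Tendsto (fun s' : ℝ => (cpq p q)⁻¹ * Real.exp (-(1 - s') ^ (-q)))
        (nhdsWithin (1:ℝ) (Set.Iio 1)) (nhds 0) := by
      have t1 : Tendsto (fun s' : ℝ => 1 - s') (nhdsWithin (1:ℝ) (Set.Iio 1))
          (nhdsWithin (0:ℝ) (Set.Ioi 0)) := by
        apply tendsto_nhdsWithin_of_tendsto_nhds_of_eventually_within
        · have : Continuous fun s' : ℝ => 1 - s' := by continuity
          simpa using (this.tendsto 1).mono_left nhdsWithin_le_nhds
        · filter_upwards [self_mem_nhdsWithin] with y hy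
          simpa using hy
      have t2 : Tendsto (fun s' : ℝ => ((1 - s')⁻¹) ^ q) (nhdsWithin (1:ℝ) (Set.Iio 1))
          atTop := (tendsto_rpow_atTop hq).comp (tendsto_inv_nhdsGT_zero.comp t1)
      have t3 : Tendsto (fun s' : ℝ => (1 - s') ^ (-q)) (nhdsWithin (1:ℝ) (Set.Iio 1))
          atTop := by
        refine t2.congr' ?_
        filter_upwards [self_mem_nhdsWithin] with y hy
        have : (0:ℝ) < 1 - y := by simp at hy; linarith
        rw [Real.inv_rpow this.le, ← Real.rpow_neg this.le]
      have t4 := Real.tendsto_exp_neg_atTop_nhds_zero.comp t3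
      simpa using (t4.const_mul ((cpq p q)⁻¹))
    apply squeeze_zero' (by filter_upwards with x using wpq_nonneg p q x) _ hb
    · filter_upwards [hmem] with y hy
      have hyI : y ∈ Set.Ioo (0:ℝ) 1 := ⟨lt_trans hs.1 hy.1, hy.2⟩
      rw [wpq_eq, if_pos hyI]
      have h1y : (0:ℝ) < 1 - y := by linarith [hy.2]
      have hyp : (1:ℝ) ≤ y ^ (-p) := by
        rw [Real.rpow_neg hyI.1.le, one_le_inv_iff₀]
        exact ⟨Real.rpow_pos_of_pos hyI.1 p, Real.rpow_le_one hyI.1.le hyI.2.le hp.le⟩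
      gcongr
      · exact inv_nonneg.2 (cpq_pos p q).le
      exact le_mul_of_one_le_left (Real.rpow_nonneg h1y.le _) hyp
  have hint : Tendsto (fun s' => ∫ u in s..s', wD p q u) (nhdsWithin (1:ℝ) (Set.Iio 1))
      (nhds (∫ u in s..1, wD p q u)) :=
    ((intervalIntegral.continuous_primitive (ii_wD p q hp hq) s).tendsto 1).mono_left
      nhdsWithin_le_nhds
  have hsum : Tendsto (fun s' => wpq p q s' + ∫ u in s..s', wD p q u)
      (nhdsWithin (1:ℝ) (Set.Iio 1)) (nhds (0 + ∫ u in s..1, wD p q u)) :=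
    hwpq0.add hint
  have hconst : Tendsto (fun _ : ℝ => wpq p q s) (nhdsWithin (1:ℝ) (Set.Iio 1))
      (nhds (wpq p q s)) := tendsto_const_nhds
  have : Tendsto (fun _ : ℝ => wpq p q s) (nhdsWithin (1:ℝ) (Set.Iio 1))
      (nhds (0 + ∫ u in s..1, wD p q u)) := by
    refine hsum.congr' ?_
    filter_upwards [hmem] with s' hs'
    exact (key s' hs').symm
  have := tendsto_nhds_unique hconst this
  rw [this, zero_add]

lemma key_identity {E : Type*} [NormedAddCommGroup E] [NormedSpace ℝ E] [CompleteSpace E]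
    (p q : ℝ) (hp : 0 < p) (hq : 0 < q) (b : ℝ → E)
    (hb : IntegrableOn b (Set.Ioc (0:ℝ) 1) volume) :
    ∫ s in (0:ℝ)..1, wpq p q s • b s
      = ∫ u in (0:ℝ)..1, wD p q u • ∫ s in (0:ℝ)..u, b s := by
  -- reduce to the case of strongly measurable `b`
  have main : ∀ b : ℝ → E, StronglyMeasurable b → IntegrableOn b (Set.Ioc (0:ℝ) 1) volume →
      ∫ s in (0:ℝ)..1, wpq p q s • b s
        = ∫ u in (0:ℝ)..1, wD p q u • ∫ s in (0:ℝ)..u, b s := by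
    intro b hsm hb
    have hSm : MeasurableSet (Set.Ioc (0:ℝ) 1) := measurableSet_Ioc
    set S : Set ℝ := Set.Ioc (0:ℝ) 1 with hS
    set k : ℝ × ℝ → E := fun z => if z.1 < z.2 then wD p q z.2 • b z.1 else 0 with hk
    have hks : StronglyMeasurable k := by
      have : k = Set.indicator {z : ℝ × ℝ | z.1 < z.2} (fun z => wD p q z.2 • b z.1) := by
        funext z
        by_cases hz : z.1 < z.2 <;> simp [hk, hz, Set.indicator_apply, Set.mem_setOf_eq]
      rw [this]
      exact (((meas_wD p q).comp measurable_snd).stronglyMeasurable.smul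
        (hsm.comp_measurable measurable_fst)).indicator
        (measurableSet_lt measurable_fst measurable_snd)
    have hki : Integrable k ((volume.restrict S).prod (volume.restrict S)) := by
      have hprod : Integrable (fun z : ℝ × ℝ => ‖b z.1‖ * |wD p q z.2|)
          ((volume.restrict S).prod (volume.restrict S)) :=
        Integrable.mul_prod hb.norm ((integrable_wD p q hp hq).restrict.abs)
      refine hprod.mono' hks.aestronglyMeasurable ?_
      filter_upwards with z
      by_cases hz : z.1 < z.2
      · simp only [hk, if_pos hz]
        rw [norm_smul, Real.norm_eq_abs]
        exact le_of_eq (mul_comm _ _)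
      · simp only [hk, if_neg hz, norm_zero]
        positivity
    have swap := integral_integral_swap (μ := volume.restrict S) (ν := volume.restrict S)
        (f := fun s u => k (s, u)) (by exact hki)
    calc ∫ s in (0:ℝ)..1, wpq p q s • b s
        = ∫ s in S, wpq p q s • b s := by rw [intervalIntegral.integral_of_le zero_le_one]
      _ = ∫ s in S, ∫ u in S, k (s, u) := by
          refine setIntegral_congr_fun hSm fun s hs => ?_
          rw [wpq_eq_integral_wD p q hp hq hs, ← intervalIntegral.integral_smul_const,
            intervalIntegral.integral_of_le hs.2,
            ← Set.inter_eq_self_of_subset_right (Set.Ioc_subset_Ioc_left hs.1.le),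
            ← setIntegral_indicator measurableSet_Ioc]
          refine setIntegral_congr_fun hSm fun u hu => ?_
          rw [Set.indicator_apply]
          by_cases hss : s < u
          · rw [if_pos ⟨hss, hu.2⟩]
            simp only [hk, if_pos hss]
          · rw [if_neg (fun hc => hss hc.1)]
            simp only [hk, if_neg hss]
      _ = ∫ u in S, ∫ s in S, k (s, u) := swap
      _ = ∫ u in S, wD p q u • ∫ s in (0:ℝ)..u, b s := by
          refine setIntegral_congr_fun hSm fun u hu => ?_
          have h1 : (fun s => k (s, u)) = Set.indicator (Set.Iio u) (fun s => wD p q u • b s) :=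
            funext fun s => by rw [Set.indicator_apply]; rfl
          rw [h1, setIntegral_indicator measurableSet_Iio]
          have h2 : S ∩ Set.Iio u = Set.Ioo 0 u := by
            ext y
            constructor
            · rintro ⟨⟨hy1, _⟩, hy3⟩; exact ⟨hy1, hy3⟩
            · rintro ⟨hy1, hy2⟩; exact ⟨⟨hy1, le_trans hy2.le hu.2⟩, hy2⟩
          rw [h2, integral_smul, ← integral_Ioc_eq_integral_Ioo,
            ← intervalIntegral.integral_of_le hu.1.le]
      _ = ∫ u in (0:ℝ)..1, wD p q u • ∫ s in (0:ℝ)..u, b s := by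
          rw [intervalIntegral.integral_of_le zero_le_one]
  obtain ⟨b', hb'sm, hb'ae⟩ := hb.aestronglyMeasurable
  have hb' : IntegrableOn b' (Set.Ioc (0:ℝ) 1) volume := hb.congr hb'ae
  have e1 : ∫ s in (0:ℝ)..1, wpq p q s • b s = ∫ s in (0:ℝ)..1, wpq p q s • b' s := by
    rw [intervalIntegral.integral_of_le zero_le_one,
      intervalIntegral.integral_of_le zero_le_one]
    refine integral_congr_ae ?_
    filter_upwards [hb'ae] with s hs
    rw [hs]
  have e2 : ∀ u, 0 ≤ u → u ≤ 1 → (∫ s in (0:ℝ)..u, b s) = ∫ s in (0:ℝ)..u, b' s := by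
    intro u hu0 hu1
    rw [intervalIntegral.integral_of_le hu0, intervalIntegral.integral_of_le hu0]
    refine integral_congr_ae ?_
    exact ae_restrict_of_ae_restrict_of_subset (Set.Ioc_subset_Ioc_right hu1) hb'ae
  rw [e1, main b' hb'sm hb']
  refine (intervalIntegral.integral_congr fun u hu => ?_).symm
  rw [Set.uIcc_of_le zero_le_one] at hu
  rw [e2 u hu.1 hu.2]

lemma integral_u_wD (p q : ℝ) (hp : 0 < p) (hq : 0 < q) :
    ∫ u in (0:ℝ)..1, wD p q u * u = 1 := by
  have h := key_identity (E := ℝ) p q hp hq (fun _ => (1:ℝ))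
    (integrableOn_const (by simp [Real.volume_Ioc]))
  have h2 : ∫ s in (0:ℝ)..1, wpq p q s • (1:ℝ) = 1 := by
    simp only [smul_eq_mul, mul_one]
    exact integral_wpq p q
  rw [h2] at h
  refine Eq.trans ?_ h.symm
  refine intervalIntegral.integral_congr fun u _ => ?_
  simp [intervalIntegral.integral_const, smul_eq_mul]

/-- If `(1/T)∫₀ᵀ a` converges to `L` in a Banach space, then the `w_{p,q}`-weighted
averages `(1/T)∫₀ᵀ w_{p,q}(t/T) a(t) dt` converge to `L` as well. -/
theorem weighted_integral_average_tendsto_of_average_tendsto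
    {B : Type*} [NormedAddCommGroup B] [NormedSpace ℝ B] [CompleteSpace B]
    (p q : ℝ) (hp : 0 < p) (hq : 0 < q) (a : ℝ → B) (L : B)
    (hloc : ∀ T : ℝ, IntervalIntegrable a volume 0 T)
    (h : Tendsto (fun T : ℝ => T⁻¹ • ∫ t in (0:ℝ)..T, a t) atTop (nhds L)) :
    Tendsto (fun T : ℝ => T⁻¹ • ∫ t in (0:ℝ)..T, wpq p q (t / T) • a t)
      atTop (nhds L) := by
  have hIab : ∀ c d : ℝ, IntervalIntegrable a volume c d := fun c d =>
    (hloc c).symm.trans (hloc d)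
  set F : ℝ → B := fun S => ∫ t in (0:ℝ)..S, a t with hF
  have hFc : Continuous F := intervalIntegral.continuous_primitive hIab 0
  -- a uniform bound on the normalized primitives
  have hev : ∀ᶠ S in atTop, ‖S⁻¹ • F S‖ < ‖L‖ + 1 :=
    (h.norm).eventually_lt_const (by linarith [norm_nonneg L])
  obtain ⟨S₁, hS₁⟩ := eventually_atTop.mp hev
  set S₀ := max S₁ 1 with hS₀def
  have hS₀pos : (0:ℝ) < S₀ := lt_of_lt_of_le one_pos (le_max_right _ _)
  have hbig : ∀ S, S₀ ≤ S → ‖F S‖ ≤ S * (‖L‖ + 1) := by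
    intro S hS
    have hSpos : 0 < S := lt_of_lt_of_le hS₀pos hS
    have h1 := (hS₁ S (le_trans (le_max_left _ _) hS)).le
    rw [norm_smul, norm_inv, Real.norm_eq_abs, abs_of_pos hSpos] at h1
    calc ‖F S‖ = S * (S⁻¹ * ‖F S‖) := by field_simp
      _ ≤ S * (‖L‖ + 1) := mul_le_mul_of_nonneg_left h1 hSpos.le
  obtain ⟨M, hM⟩ := (isCompact_Icc (a := (0:ℝ)) (b := S₀)).exists_bound_of_continuousOn
    hFc.continuousOn
  have hM0 : 0 ≤ M := le_trans (norm_nonneg (F 0)) (hM 0 ⟨le_rfl, hS₀pos.le⟩)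
  set C := M + (‖L‖ + 1) with hC
  have hCb : ∀ T, (1:ℝ) ≤ T → ∀ u ∈ Set.Ioc (0:ℝ) 1, ‖T⁻¹ • F (u * T)‖ ≤ C := by
    intro T hT u hu
    have hTpos : (0:ℝ) < T := lt_of_lt_of_le one_pos hT
    have huT : 0 ≤ u * T := mul_nonneg hu.1.le hTpos.le
    rw [norm_smul, norm_inv, Real.norm_eq_abs, abs_of_pos hTpos]
    rcases le_or_gt (u * T) S₀ with hcase | hcase
    · have h1 : ‖F (u * T)‖ ≤ M := hM _ ⟨huT, hcase⟩
      have h2 : T⁻¹ ≤ 1 := by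
        rw [inv_le_one_iff₀]; right; exact hT
      calc T⁻¹ * ‖F (u * T)‖ ≤ 1 * M := mul_le_mul h2 h1 (norm_nonneg _) one_pos.le
        _ ≤ C := by rw [hC]; linarith [norm_nonneg L]
    · have h1 : ‖F (u * T)‖ ≤ (u * T) * (‖L‖ + 1) := hbig _ hcase.le
      calc T⁻¹ * ‖F (u * T)‖ ≤ T⁻¹ * ((u * T) * (‖L‖ + 1)) :=
            mul_le_mul_of_nonneg_left h1 (inv_nonneg.2 hTpos.le)
        _ = u * (‖L‖ + 1) := by field_simp
        _ ≤ 1 * (‖L‖ + 1) := by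
            have : (0:ℝ) ≤ ‖L‖ + 1 := by linarith [norm_nonneg L]
            exact mul_le_mul_of_nonneg_right hu.2 this
        _ ≤ C := by rw [hC]; linarith [norm_nonneg L]
  -- dominated convergence for the reduced expression
  have hlim : Tendsto (fun T : ℝ => ∫ u in Set.Ioc (0:ℝ) 1, wD p q u • (T⁻¹ • F (u * T)))
      atTop (nhds (∫ u in Set.Ioc (0:ℝ) 1, wD p q u • (u • L))) := by
    apply tendsto_integral_filter_of_dominated_convergence (fun u => |wD p q u| * C)
    · filter_upwards with T
      exact (((meas_wD p q).stronglyMeasurable.smul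
        (((hFc.comp (continuous_mul_right T)).const_smul
          T⁻¹).stronglyMeasurable))).aestronglyMeasurable
    · filter_upwards [eventually_ge_atTop (1:ℝ)] with T hT
      filter_upwards [ae_restrict_mem measurableSet_Ioc] with u hu
      rw [norm_smul, Real.norm_eq_abs]
      exact mul_le_mul_of_nonneg_left (hCb T hT u hu) (abs_nonneg _)
    · exact ((integrable_wD p q hp hq).restrict.abs).mul_const C
    · have h1 : ∀ᵐ u ∂(volume.restrict (Set.Ioc (0:ℝ) 1)), u ∈ Set.Ioo (0:ℝ) 1 := by
        have hae : ∀ᵐ u : ℝ ∂volume, u ≠ 1 := by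
          rw [ae_iff]
          simpa using measure_singleton (1:ℝ)
        filter_upwards [ae_restrict_mem measurableSet_Ioc,
          hae.filter_mono (ae_mono Measure.restrict_le_self)] with u hu hne
        exact ⟨hu.1, lt_of_le_of_ne hu.2 hne⟩
      filter_upwards [h1] with u hu
      apply Filter.Tendsto.const_smul
      have h2 : Tendsto (fun T : ℝ => (u * T)⁻¹ • F (u * T)) atTop (nhds L) :=
        h.comp (Filter.Tendsto.const_mul_atTop hu.1 tendsto_id)
      have h3 := h2.const_smul u
      refine h3.congr' ?_
      filter_upwards [eventually_gt_atTop (0:ℝ)] with T hT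
      rw [smul_smul, mul_inv, ← mul_assoc, mul_inv_cancel₀ hu.1.ne', one_mul]
  -- identify the limit
  have hval : (∫ u in Set.Ioc (0:ℝ) 1, wD p q u • (u • L)) = L := by
    have e : (fun u => wD p q u • (u • L)) = fun u => (wD p q u * u) • L := by
      funext u; rw [smul_smul]
    rw [e, integral_smul_const]
    have hv := integral_u_wD p q hp hq
    rw [intervalIntegral.integral_of_le zero_le_one] at hv
    rw [hv, one_smul]
  rw [hval] at hlim
  -- identify the reduced expression with the original one, for large `T`
  refine Tendsto.congr' ?_ hlim
  filter_upwards [eventually_ge_atTop (1:ℝ)] with T hT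
  have hTpos : (0:ℝ) < T := lt_of_lt_of_le one_pos hT
  have hTne : T ≠ 0 := hTpos.ne'
  have sub1 : T⁻¹ • (∫ t in (0:ℝ)..T, wpq p q (t / T) • a t)
      = ∫ s in (0:ℝ)..1, wpq p q s • a (T * s) := by
    have hcomp := intervalIntegral.integral_comp_mul_left (a := 0) (b := 1)
      (fun t => wpq p q (t / T) • a t) hTne
    simp only [mul_zero, mul_one] at hcomp
    rw [← hcomp]
    refine intervalIntegral.integral_congr fun s _ => ?_
    rw [mul_div_cancel_left₀ _ hTne]
  have hbT : IntegrableOn (fun s => a (T * s)) (Set.Ioc (0:ℝ) 1) volume := by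
    have hcomp := (hIab 0 T).comp_mul_left (c := T)
    rw [zero_div, div_self hTne] at hcomp
    exact hcomp.1
  have hkey := key_identity p q hp hq (fun s => a (T * s)) hbT
  have sub2 : ∀ u : ℝ, (∫ s in (0:ℝ)..u, a (T * s)) = T⁻¹ • F (u * T) := by
    intro u
    have hcomp := intervalIntegral.integral_comp_mul_left (a := 0) (b := u) a hTne
    simp only [mul_zero] at hcomp
    rw [hcomp, mul_comm T u]
  rw [sub1, hkey, intervalIntegral.integral_of_le zero_le_one]
  refine setIntegral_congr_fun measurableSet_Ioc fun u _ => ?_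
  rw [sub2 u]
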